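/- For every integer c ≥ 1 and all integers n ≥ 0 and k ≥ 0, the number of colored Lehmer codes of length n with parameter c whose entries sum to k equals the colored Mahonian number i_c(n,k); that is, |L^{(c)}_{n,k}| = i_c(n,k). -/

import Mathlib

open Finset

/-- The inversion number of a permutation of `Fin n`:
`inv(π) = #{(i,j) : i < j, π(i) > π(j)}`. -/
def invNum {n : ℕ} (π : Equiv.Perm (Fin n)) : ℕ :=
  ((Finset.univ : Finset (Fin n × Fin n)).filter
    (fun p => p.1 < p.2 ∧ π p.2 < π p.1)).card

/-- The colored inversion statistic on a colored permutation `σ = (π, f)`: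
`inv_c(σ) = inv(π) + ∑ f(j) + c·#{(i,j) : i < j, π(i) < π(j), f(j) ≠ 0}`. -/
def invC (c : ℕ) {n : ℕ} (σ : Equiv.Perm (Fin n) × (Fin n → Fin c)) : ℕ :=
  invNum σ.1 + (∑ j, (σ.2 j : ℕ)) +
    c * ((Finset.univ : Finset (Fin n × Fin n)).filter
      (fun p => p.1 < p.2 ∧ σ.1 p.1 < σ.1 p.2 ∧ (σ.2 p.2 : ℕ) ≠ 0)).card

/-- The colored Mahonian number `i_c(n,k)`: the number of colored permutations
of size `n` with exactly `k` colored inversions. -/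
noncomputable def mahonianC (c n k : ℕ) : ℕ :=
  Nat.card {σ : Equiv.Perm (Fin n) × (Fin n → Fin c) // invC c σ = k}

/-- The number of colored Lehmer codes `(ℓ_1,…,ℓ_n)` with `0 ≤ ℓ_i < c·i`
and `ℓ_1 + ⋯ + ℓ_n = k`, i.e. `|L^{(c)}_{n,k}|`. -/
noncomputable def lehmerCount (c n k : ℕ) : ℕ :=
  Nat.card {ℓ : Fin n → ℕ // (∀ i : Fin n, ℓ i < c * (i.1 + 1)) ∧ ∑ i, ℓ i = k}

/-- `|L^{(c)}_{n,k}| = i_c(n,k)`. -/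
def invAt {n : ℕ} (π : Equiv.Perm (Fin n)) (j : Fin n) : ℕ :=
  (univ.filter fun i => i < j ∧ π j < π i).card

/-- collapse map removing value m -/
def cmap {n : ℕ} (m : Fin (n + 1)) (v : Fin (n + 1)) : ℕ :=
  if v.1 < m.1 then v.1 else v.1 - 1

lemma cmap_lt {n : ℕ} (m v : Fin (n + 1)) (hv : v ≠ m) : cmap m v < n := by
  have h1 : v.1 ≠ m.1 := fun h => hv (Fin.ext h)
  have h2 : v.1 < n + 1 := v.2
  have h3 : m.1 < n + 1 := m.2
  unfold cmap; split_ifs <;> omega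

lemma cmap_lt_iff {n : ℕ} (m v w : Fin (n + 1)) (hv : v ≠ m) (hw : w ≠ m) :
    cmap m v < cmap m w ↔ v < w := by
  have h1 : v.1 ≠ m.1 := fun h => hv (Fin.ext h)
  have h2 : w.1 ≠ m.1 := fun h => hw (Fin.ext h)
  rw [Fin.lt_def]
  unfold cmap; split_ifs <;> omega

lemma cmap_inj {n : ℕ} (m v w : Fin (n + 1)) (hv : v ≠ m) (hw : w ≠ m)
    (h : cmap m v = cmap m w) : v = w := by
  have h1 : v.1 ≠ m.1 := fun h => hv (Fin.ext h)
  have h2 : w.1 ≠ m.1 := fun h => hw (Fin.ext h)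
  apply Fin.ext
  unfold cmap at h; split_ifs at h <;> omega

lemma pi_castSucc_ne {n : ℕ} (π : Equiv.Perm (Fin (n + 1))) (i : Fin n) :
    π i.castSucc ≠ π (Fin.last n) :=
  fun h => absurd (π.injective h) (Fin.castSucc_lt_last i).ne

/-- the pattern of π on the first n positions -/
noncomputable def tau {n : ℕ} (π : Equiv.Perm (Fin (n + 1))) : Equiv.Perm (Fin n) := by
  refine Equiv.ofBijective (fun i => ⟨cmap (π (Fin.last n)) (π i.castSucc),
    cmap_lt _ _ (pi_castSucc_ne π i)⟩) ?_
  rw [← Finite.injective_iff_bijective]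
  intro a b hab
  have := cmap_inj _ _ _ (pi_castSucc_ne π a) (pi_castSucc_ne π b) (congrArg Fin.val hab)
  exact Fin.castSucc_injective n (π.injective this)

lemma tau_apply {n : ℕ} (π : Equiv.Perm (Fin (n + 1))) (i : Fin n) :
    (tau π i : ℕ) = cmap (π (Fin.last n)) (π i.castSucc) := by
  simp [tau]

lemma invAt_tau {n : ℕ} (π : Equiv.Perm (Fin (n + 1))) (i : Fin n) :
    invAt (tau π) i = invAt π i.castSucc := by
  unfold invAt
  refine Finset.card_bij' (fun a _ => a.castSucc)
    (fun a ha => ⟨a.1, by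
      simp only [Finset.mem_filter, Finset.mem_univ, true_and] at ha
      have h := ha.1
      rw [Fin.lt_def] at h
      have : i.1 < n := i.2
      simp only [Fin.coe_castSucc] at h
      omega⟩) ?_ ?_ ?_ ?_
  · intro a ha
    simp only [Finset.mem_filter, Finset.mem_univ, true_and] at ha ⊢
    refine ⟨Fin.castSucc_lt_castSucc_iff.mpr ha.1, ?_⟩
    have h := ha.2
    rw [Fin.lt_def, tau_apply, tau_apply] at h
    rw [cmap_lt_iff _ _ _ (pi_castSucc_ne π i) (pi_castSucc_ne π a)] at h
    exact h
  · intro a ha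
    simp only [Finset.mem_filter, Finset.mem_univ, true_and] at ha ⊢
    have hcs : (⟨a.1, by
        have h := ha.1; rw [Fin.lt_def] at h
        have : i.1 < n := i.2
        simp only [Fin.coe_castSucc] at h; omega⟩ : Fin n).castSucc = a := by
      apply Fin.ext; simp
    constructor
    · rw [Fin.lt_def]
      have h := ha.1; rw [Fin.lt_def] at h
      simpa using h
    · rw [Fin.lt_def, tau_apply, tau_apply, hcs,
        cmap_lt_iff _ _ _ (pi_castSucc_ne π i) (by exact π.injective.ne (ne_of_lt (ha.1.trans (Fin.castSucc_lt_last i))))]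
      exact ha.2
  · intro a _; apply Fin.ext; simp
  · intro a _; apply Fin.ext; simp

lemma invAt_last {n : ℕ} (π : Equiv.Perm (Fin (n + 1))) :
    invAt π (Fin.last n) = n - (π (Fin.last n)).1 := by
  unfold invAt
  have : (univ.filter fun i => i < Fin.last n ∧ π (Fin.last n) < π i).card
      = (Finset.Ioi (π (Fin.last n))).card := by
    apply Finset.card_nbij (fun a => π a)
    · intro a ha
      simp only [Finset.mem_coe, Finset.mem_filter, Finset.mem_univ, true_and] at ha
      simpa using ha.2
    · intro a _ b _ h
      exact π.injective h
    · intro v hv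
      simp only [Finset.coe_filter, Finset.mem_univ, true_and, Set.mem_setOf_eq,
        Finset.coe_Ioi, Set.mem_Ioi] at hv ⊢
      refine ⟨π.symm v, ⟨?_, by simpa using hv⟩, by simp⟩
      have hne : π.symm v ≠ Fin.last n := by
        intro h
        rw [← h] at hv
        simp at hv
      exact lt_of_le_of_ne (Fin.le_last _) hne
  rw [this, Fin.card_Ioi]
  omega

lemma invAt_injective : ∀ {n : ℕ} (π π' : Equiv.Perm (Fin n)),
    (∀ j, invAt π j = invAt π' j) → π = π' := by
  intro n
  induction n with
  | zero => intro π π' _; ext j; exact j.elim0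
  | succ n ih =>
    intro π π' h
    have hlast : π (Fin.last n) = π' (Fin.last n) := by
      have h1 := h (Fin.last n)
      rw [invAt_last, invAt_last] at h1
      have h2 : (π (Fin.last n)).1 < n + 1 := (π (Fin.last n)).2
      have h3 : (π' (Fin.last n)).1 < n + 1 := (π' (Fin.last n)).2
      exact Fin.ext (by omega)
    have htau : tau π = tau π' := by
      apply ih
      intro j
      rw [invAt_tau, invAt_tau]
      exact h j.castSucc
    ext j
    induction j using Fin.lastCases with
    | last => exact congrArg Fin.val hlast
    | cast i =>
      have h1 : (tau π i : ℕ) = (tau π' i : ℕ) := by rw [htau]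
      rw [tau_apply, tau_apply, hlast] at h1
      have := cmap_inj _ _ _ (by rw [← hlast]; exact pi_castSucc_ne π i)
        (pi_castSucc_ne π' i) h1
      exact congrArg Fin.val this

def coinvAt {n : ℕ} (π : Equiv.Perm (Fin n)) (j : Fin n) : ℕ :=
  (univ.filter fun i => i < j ∧ π i < π j).card

lemma invAt_add_coinvAt {n : ℕ} (π : Equiv.Perm (Fin n)) (j : Fin n) :
    invAt π j + coinvAt π j = j.1 := by
  classical
  rw [invAt, coinvAt, ← Finset.card_union_of_disjoint]
  · rw [← Finset.filter_or]
    have h1 : (univ.filter fun i => (i < j ∧ π j < π i) ∨ (i < j ∧ π i < π j))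
        = univ.filter fun i => i < j := by
      apply Finset.filter_congr
      intro i _
      constructor
      · rintro (⟨h, _⟩ | ⟨h, _⟩) <;> exact h
      · intro h
        rcases lt_or_gt_of_ne (fun he : π i = π j => absurd (π.injective he) h.ne) with h2 | h2
        · exact Or.inr ⟨h, h2⟩
        · exact Or.inl ⟨h, h2⟩
    rw [h1]
    have : (univ.filter fun i => i < j) = Finset.Iio j := by
      ext i; simp
    rw [this, Fin.card_Iio]
  · rw [Finset.disjoint_filter]
    rintro i _ ⟨_, h2⟩ ⟨_, h4⟩
    exact absurd (h2.trans h4) (lt_irrefl _)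


lemma card_pairs {n : ℕ} (P : Fin n → Fin n → Prop) [∀ i j, Decidable (P i j)] :
    ((univ : Finset (Fin n × Fin n)).filter (fun p => P p.1 p.2)).card
      = ∑ j, (univ.filter fun i => P i j).card := by
  rw [Finset.card_filter, Fintype.sum_prod_type, Finset.sum_comm]
  exact Finset.sum_congr rfl fun j _ => (Finset.card_filter _ _).symm

def phi (c : ℕ) {n : ℕ} (σ : Equiv.Perm (Fin n) × (Fin n → Fin c)) : Fin n → ℕ :=
  fun j => invAt σ.1 j + (σ.2 j : ℕ) +
    (if (σ.2 j : ℕ) = 0 then 0 else c * coinvAt σ.1 j)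

lemma sum_phi (c : ℕ) {n : ℕ} (σ : Equiv.Perm (Fin n) × (Fin n → Fin c)) :
    ∑ j, phi c σ j = invC c σ := by
  classical
  unfold phi invC
  rw [Finset.sum_add_distrib, Finset.sum_add_distrib]
  congr 1
  · congr 1
    rw [invNum, card_pairs (fun i j => i < j ∧ σ.1 j < σ.1 i)]
    rfl
  · rw [card_pairs (fun i j => i < j ∧ σ.1 i < σ.1 j ∧ (σ.2 j : ℕ) ≠ 0), Finset.mul_sum]
    apply Finset.sum_congr rfl
    intro j _
    by_cases h : (σ.2 j : ℕ) = 0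
    · simp [h]
    · simp only [h, if_false, coinvAt]
      congr 1
      apply Finset.card_nbij id (by simp [h, Set.MapsTo]) (by simp [Set.InjOn]) (by intro x hx; simp at hx ⊢; tauto)

lemma phi_lt (c : ℕ) (hc : 1 ≤ c) {n : ℕ} (σ : Equiv.Perm (Fin n) × (Fin n → Fin c))
    (j : Fin n) : phi c σ j < c * (j.1 + 1) := by
  obtain ⟨d, rfl⟩ : ∃ d, c = d + 1 := ⟨c - 1, by omega⟩
  have hab := invAt_add_coinvAt σ.1 j
  have hf : (σ.2 j : ℕ) < d + 1 := (σ.2 j).2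
  unfold phi
  by_cases h : (σ.2 j : ℕ) = 0
  · simp only [h, if_pos rfl]
    have : invAt σ.1 j ≤ j.1 := by omega
    calc invAt σ.1 j + 0 + 0 ≤ j.1 := by omega
      _ < 1 * (j.1 + 1) := by omega
      _ ≤ (d + 1) * (j.1 + 1) := Nat.mul_le_mul_right _ (by omega)
  · simp only [h, if_neg h]
    have h1 : d * coinvAt σ.1 j ≤ d * j.1 := Nat.mul_le_mul_left d (by omega)
    have e1 : (d + 1) * coinvAt σ.1 j = d * coinvAt σ.1 j + coinvAt σ.1 j := by ring
    have e2 : (d + 1) * (j.1 + 1) = d * j.1 + d + j.1 + 1 := by ring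
    rw [e1, e2]
    have hgen : ∀ x y : ℕ, x ≤ y →
        invAt σ.1 j + (σ.2 j : ℕ) + (x + coinvAt σ.1 j) < y + d + j.1 + 1 := by
      intro x y hxy; omega
    exact hgen _ _ h1

lemma encode_inj {c t : ℕ} (hc : 1 ≤ c) {a b a' b' f f' : ℕ}
    (hf : f < c) (hf' : f' < c) (hab : a + b = t) (hab' : a' + b' = t)
    (h : a + f + (if f = 0 then 0 else c * b) = a' + f' + (if f' = 0 then 0 else c * b')) :
    f = f' ∧ a = a' := by
  have hb : b ≤ c * b := Nat.le_mul_of_pos_left _ hc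
  have hb' : b' ≤ c * b' := Nat.le_mul_of_pos_left _ hc
  by_cases h0 : f = 0 <;> by_cases h0' : f' = 0
  · rw [if_pos h0, if_pos h0'] at h; omega
  · rw [if_pos h0, if_neg h0'] at h
    exfalso
    have hgen : ∀ x : ℕ, b' ≤ x → ¬(a + f + 0 = a' + f' + x) := by
      intro x hx; omega
    exact hgen _ hb' h
  · rw [if_neg h0, if_pos h0'] at h
    exfalso
    have hgen : ∀ x : ℕ, b ≤ x → ¬(a + f + x = a' + f' + 0) := by
      intro x hx; omega
    exact hgen _ hb h
  · rw [if_neg h0, if_neg h0'] at h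
    obtain ⟨d, rfl⟩ : ∃ d, c = d + 1 := ⟨c - 1, by omega⟩
    have hd : 1 ≤ d := by omega
    have e1 : (d + 1) * b = d * b + b := by ring
    have e2 : (d + 1) * b' = d * b' + b' := by ring
    rw [e1, e2] at h
    have key : (f - 1) + d * b = (f' - 1) + d * b' := by
      have hgen : ∀ x y : ℕ, a + f + (x + b) = a' + f' + (y + b') →
          (f - 1) + x = (f' - 1) + y := by intro x y hxy; omega
      exact hgen _ _ h
    have hm : ((f - 1) + d * b) % d = ((f' - 1) + d * b') % d := by rw [key]
    rw [Nat.add_mul_mod_self_left, Nat.add_mul_mod_self_left,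
      Nat.mod_eq_of_lt (by omega), Nat.mod_eq_of_lt (by omega)] at hm
    have hff : f = f' := by omega
    have hbb : d * b = d * b' := by omega
    have : b = b' := Nat.eq_of_mul_eq_mul_left (by omega) hbb
    exact ⟨hff, by omega⟩

lemma phi_injective (c : ℕ) (hc : 1 ≤ c) {n : ℕ} :
    Function.Injective (phi c (n := n)) := by
  intro σ σ' h
  have key : ∀ j, (σ.2 j : ℕ) = (σ'.2 j : ℕ) ∧ invAt σ.1 j = invAt σ'.1 j := by
    intro j
    have := encode_inj hc (σ.2 j).2 (σ'.2 j).2 (invAt_add_coinvAt σ.1 j)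
      (invAt_add_coinvAt σ'.1 j) (congrFun h j)
    exact ⟨this.1, this.2⟩
  have hπ : σ.1 = σ'.1 := invAt_injective _ _ fun j => (key j).2
  have hf : σ.2 = σ'.2 := funext fun j => Fin.ext (key j).1
  exact Prod.ext hπ hf

theorem lehmerCount_eq_mahonianC (c n k : ℕ) (hc : 1 ≤ c) :
    lehmerCount c n k = mahonianC c n k := by
  --

  classical
  let Ψ : (Equiv.Perm (Fin n) × (Fin n → Fin c)) → (∀ j : Fin n, Fin (c * (j.1 + 1))) :=
    fun σ j => ⟨phi c σ j, phi_lt c hc σ j⟩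
  have hinj : Function.Injective Ψ := by
    intro σ σ' h
    exact phi_injective c hc (funext fun j => congrArg Fin.val (congrFun h j))
  have hcard : Fintype.card (Equiv.Perm (Fin n) × (Fin n → Fin c))
      = Fintype.card (∀ j : Fin n, Fin (c * (j.1 + 1))) := by
    rw [Fintype.card_prod, Fintype.card_perm, Fintype.card_fun, Fintype.card_fin,
      Fintype.card_fin, Fintype.card_pi]
    simp only [Fintype.card_fin]
    rw [Finset.prod_mul_distrib, Finset.prod_const, Finset.card_univ, Fintype.card_fin]
    rw [Fin.prod_univ_eq_prod_range (fun i => i + 1) n,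
      Finset.prod_range_add_one_eq_factorial]
    ring
  have hbij : Function.Bijective Ψ :=
    (Fintype.bijective_iff_injective_and_card Ψ).mpr ⟨hinj, hcard⟩
  let E := Equiv.ofBijective Ψ hbij
  have hE : ∀ σ, ∀ j, ((E σ) j : ℕ) = phi c σ j := fun σ j => rfl
  let E' : {σ : Equiv.Perm (Fin n) × (Fin n → Fin c) // invC c σ = k}
      ≃ {v : ∀ j : Fin n, Fin (c * (j.1 + 1)) // ∑ j, (v j : ℕ) = k} :=
    E.subtypeEquiv (fun σ => by
      rw [← sum_phi c σ]
      constructor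
      · intro h; rw [← h]; exact Finset.sum_congr rfl fun j _ => hE σ j
      · intro h; rw [← h]; exact Finset.sum_congr rfl fun j _ => (hE σ j).symm)
  let F : {v : ∀ j : Fin n, Fin (c * (j.1 + 1)) // ∑ j, (v j : ℕ) = k}
      ≃ {ℓ : Fin n → ℕ // (∀ i : Fin n, ℓ i < c * (i.1 + 1)) ∧ ∑ i, ℓ i = k} :=
    { toFun := fun v => ⟨fun j => (v.1 j : ℕ), fun j => (v.1 j).2, v.2⟩
      invFun := fun ℓ => ⟨fun j => ⟨ℓ.1 j, ℓ.2.1 j⟩, ℓ.2.2⟩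
      left_inv := fun v => rfl
      right_inv := fun ℓ => rfl }
  rw [lehmerCount, mahonianC]
  exact Nat.card_congr (F.symm.trans E'.symm)
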